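/- Let Λ be a discrete additive subgroup of ℝ^n containing a nonzero element, and let d(Λ) denote the minimum of ‖x‖² over nonzero x ∈ Λ. For every r ≥ 0 with r ≤ d(Λ)/2 and every y ∈ ℝ^n, the set {x ∈ Λ : ‖x − y‖² ≤ r} is finite with at most 2n elements. -/

import Mathlib

open Module RealInnerProductSpace

lemma key_aux (N : ℕ) (E : Type) [i1 : NormedAddCommGroup E] [i2 : InnerProductSpace ℝ E]
    [i3 : FiniteDimensional ℝ E] (hE : finrank ℝ E ≤ N) (s : Finset E)
    (hs0 : ∀ v ∈ s, v ≠ 0) (hpair : ∀ v ∈ s, ∀ w ∈ s, v ≠ w → ⟪v, w⟫ ≤ 0) :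
    s.card ≤ 2 * finrank ℝ E := by
  induction N generalizing E with
  | zero =>
    rcases s.eq_empty_or_nonempty with rfl | ⟨v, hv⟩
    · simp
    · exfalso
      have : finrank ℝ E = 0 := Nat.le_zero.mp hE
      have : Subsingleton E := finrank_zero_iff.mp this
      exact hs0 v hv (Subsingleton.elim v 0)
  | succ N ih =>
    classical
    rcases s.eq_empty_or_nonempty with rfl | ⟨v, hv⟩
    · simp
    have hv0 : v ≠ 0 := hs0 v hv
    -- finrank E = m + 1
    have hfr : 1 ≤ finrank ℝ E := by
      have : Nontrivial E := ⟨⟨v, 0, hv0⟩⟩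
      exact Module.finrank_pos_iff.mpr this
    obtain ⟨m, hm⟩ : ∃ m, finrank ℝ E = m + 1 := ⟨finrank ℝ E - 1, by omega⟩
    haveI : Fact (finrank ℝ E = m + 1) := ⟨hm⟩
    set K := (Submodule.span ℝ {v})ᗮ with hK
    have hKrank : finrank ℝ K = m := Submodule.finrank_orthogonal_span_singleton hv0
    have hvnorm : (0:ℝ) < ‖v‖ ^ 2 := pow_pos (norm_pos_iff.mpr hv0) 2
    -- projection
    set c : E → ℝ := fun w => ⟪v, w⟫ / ‖v‖ ^ 2 with hc
    have hmem : ∀ w : E, w - c w • v ∈ K := by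
      intro w
      rw [hK, Submodule.mem_orthogonal_singleton_iff_inner_left]
      rw [inner_sub_left, real_inner_smul_left, real_inner_self_eq_norm_sq]
      show ⟪w, v⟫ - ⟪v, w⟫ / ‖v‖ ^ 2 * ‖v‖ ^ 2 = 0
      rw [div_mul_cancel₀ _ (ne_of_gt hvnorm), real_inner_comm, sub_self]
    set f : E → K := fun w => ⟨w - c w • v, hmem w⟩ with hf
    -- decomposition inner product formula
    have hinner : ∀ w₁ w₂ : E, ⟪w₁, w₂⟫ = ⟪(f w₁ : E), (f w₂ : E)⟫ + c w₁ * c w₂ * ‖v‖ ^ 2 := by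
      intro w₁ w₂
      simp only [hf]
      rw [inner_sub_left, inner_sub_right, inner_sub_right, real_inner_smul_left,
        real_inner_smul_left, real_inner_smul_right, real_inner_smul_right,
        real_inner_self_eq_norm_sq]
      have h11 : ⟪w₁, v⟫ = ⟪v, w₁⟫ := real_inner_comm _ _
      rw [h11, hc]
      field_simp
      ring
    -- parallel part
    set t := s.filter (fun w => ∃ a : ℝ, w = a • v) with ht
    have hct : t.card ≤ 2 := by
      have hsub : t ⊆ insert v (t.filter (· ≠ v)) := by
        intro w hw
        by_cases h : w = v
        · simp [h]
        · exact Finset.mem_insert_of_mem (Finset.mem_filter.mpr ⟨hw, h⟩)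
      have hone : (t.filter (· ≠ v)).card ≤ 1 := by
        rw [Finset.card_le_one]
        intro w₁ hw₁ w₂ hw₂
        simp only [Finset.mem_filter, ht] at hw₁ hw₂
        obtain ⟨⟨hw₁s, a₁, rfl⟩, hne₁⟩ := hw₁
        obtain ⟨⟨hw₂s, a₂, rfl⟩, hne₂⟩ := hw₂
        have ha₁ : a₁ < 0 := by
          have h := hpair _ hw₁s v hv hne₁
          rw [real_inner_smul_left, real_inner_self_eq_norm_sq] at h
          have ha₁0 : a₁ ≠ 0 := by rintro rfl; exact hs0 _ hw₁s (by simp)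
          rcases ha₁0.lt_or_gt with h' | h'
          · exact h'
          · nlinarith
        have ha₂ : a₂ < 0 := by
          have h := hpair _ hw₂s v hv hne₂
          rw [real_inner_smul_left, real_inner_self_eq_norm_sq] at h
          have ha₂0 : a₂ ≠ 0 := by rintro rfl; exact hs0 _ hw₂s (by simp)
          rcases ha₂0.lt_or_gt with h' | h'
          · exact h'
          · nlinarith
        by_contra hne
        have h := hpair _ hw₁s _ hw₂s hne
        rw [real_inner_smul_left, real_inner_smul_right, real_inner_self_eq_norm_sq] at h
        nlinarith [mul_pos (mul_pos (neg_pos.mpr ha₁) (neg_pos.mpr ha₂)) hvnorm]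
      calc t.card ≤ (insert v (t.filter (· ≠ v))).card := Finset.card_le_card hsub
        _ ≤ (t.filter (· ≠ v)).card + 1 := Finset.card_insert_le _ _
        _ ≤ 2 := by omega
    -- nonparallel part
    set u := s \ t with hu
    have hcle : ∀ w ∈ s, w ≠ v → c w ≤ 0 := by
      intro w hw hne
      have := hpair v hv w hw (Ne.symm hne)
      have : ⟪v, w⟫ ≤ 0 := this
      exact div_nonpos_of_nonpos_of_nonneg this (le_of_lt hvnorm)
    have hfne : ∀ w ∈ u, f w ≠ 0 := by
      intro w hw hfw
      simp only [hu, ht, Finset.mem_sdiff, Finset.mem_filter, not_and] at hw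
      apply hw.2 hw.1
      have : w - c w • v = 0 := by
        have := congrArg (Subtype.val) hfw
        simpa [hf] using this
      exact ⟨c w, by linear_combination (norm := module) this⟩
    have hinj : Set.InjOn f u := by
      intro w₁ hw₁ w₂ hw₂ heq
      by_contra hne
      rw [Finset.mem_coe] at hw₁ hw₂
      have hw₁s := (Finset.mem_sdiff.mp hw₁).1
      have hw₂s := (Finset.mem_sdiff.mp hw₂).1
      have h₁v : w₁ ≠ v := by
        rintro rfl
        exact (Finset.mem_sdiff.mp hw₁).2 (Finset.mem_filter.mpr ⟨hw₁s, 1, by simp⟩)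
      have h₂v : w₂ ≠ v := by
        rintro rfl
        exact (Finset.mem_sdiff.mp hw₂).2 (Finset.mem_filter.mpr ⟨hw₂s, 1, by simp⟩)
      have hp := hpair _ hw₁s _ hw₂s hne
      rw [hinner w₁ w₂] at hp
      have hfpos : (0:ℝ) < ⟪(f w₁ : E), (f w₂ : E)⟫ := by
        rw [heq]
        have hne0 : (f w₂ : E) ≠ 0 := fun h => hfne w₂ hw₂ (Subtype.ext h)
        have hin : ⟪(f w₂ : E), (f w₂ : E)⟫ = ‖(f w₂ : E)‖ ^ 2 := real_inner_self_eq_norm_sq _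
        rw [hin]
        exact pow_pos (norm_pos_iff.mpr hne0) 2
      have hc₁ := hcle w₁ hw₁s h₁v
      have hc₂ := hcle w₂ hw₂s h₂v
      have hcc : (0:ℝ) ≤ c w₁ * c w₂ * ‖v‖ ^ 2 :=
        mul_nonneg (mul_nonneg_of_nonpos_of_nonpos hc₁ hc₂) hvnorm.le
      linarith
    -- image satisfies hypotheses
    set s' : Finset K := u.image f with hs'
    have hcard' : s'.card = u.card := Finset.card_image_of_injOn hinj
    have hbound : s'.card ≤ 2 * finrank ℝ K := by
      apply ih K (by omega : finrank ℝ K ≤ N) s'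
      · intro x hx
        obtain ⟨w, hw, rfl⟩ := Finset.mem_image.mp hx
        exact hfne w hw
      · intro x hx z hz hne
        obtain ⟨w₁, hw₁, rfl⟩ := Finset.mem_image.mp hx
        obtain ⟨w₂, hw₂, rfl⟩ := Finset.mem_image.mp hz
        have hwne : w₁ ≠ w₂ := fun h => hne (by rw [h])
        have hw₁s := (Finset.mem_sdiff.mp hw₁).1
        have hw₂s := (Finset.mem_sdiff.mp hw₂).1
        have h₁v : w₁ ≠ v := by
          rintro rfl
          exact (Finset.mem_sdiff.mp hw₁).2 (Finset.mem_filter.mpr ⟨hw₁s, 1, by simp⟩)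
        have h₂v : w₂ ≠ v := by
          rintro rfl
          exact (Finset.mem_sdiff.mp hw₂).2 (Finset.mem_filter.mpr ⟨hw₂s, 1, by simp⟩)
        have hp := hpair _ hw₁s _ hw₂s hwne
        rw [hinner w₁ w₂] at hp
        have hc₁ := hcle w₁ hw₁s h₁v
        have hc₂ := hcle w₂ hw₂s h₂v
        have heq : ⟪f w₁, f w₂⟫ = ⟪(f w₁ : E), (f w₂ : E)⟫ := Submodule.coe_inner _ _ _
        rw [heq]
        have hcc : (0:ℝ) ≤ c w₁ * c w₂ * ‖v‖ ^ 2 :=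
          mul_nonneg (mul_nonneg_of_nonpos_of_nonpos hc₁ hc₂) hvnorm.le
        linarith
    have hsplit : u.card + t.card = s.card := by
      rw [hu, ht]
      exact Finset.card_sdiff_add_card_eq_card (Finset.filter_subset _ _)
    omega

/-- Johnson-type bound on list size (second case): if `r ≤ d(Λ)/2`, then the list
`Λ ∩ B_r(y)` is finite with at most `2n` elements. -/
theorem stmt_1 {n : ℕ} (Λ : AddSubgroup (EuclideanSpace ℝ (Fin n)))
    [DiscreteTopology Λ]
    (hΛne : ∃ x ∈ Λ, x ≠ (0 : EuclideanSpace ℝ (Fin n)))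
    (dΛ : ℝ)
    (hdΛ : IsLeast {d : ℝ | ∃ x ∈ Λ, x ≠ (0 : EuclideanSpace ℝ (Fin n)) ∧ ‖x‖ ^ 2 = d} dΛ)
    (r : ℝ) (hr0 : 0 ≤ r) (hr : r ≤ dΛ / 2)
    (y : EuclideanSpace ℝ (Fin n)) :
    {x : EuclideanSpace ℝ (Fin n) | x ∈ Λ ∧ ‖x - y‖ ^ 2 ≤ r}.Finite ∧
      {x : EuclideanSpace ℝ (Fin n) | x ∈ Λ ∧ ‖x - y‖ ^ 2 ≤ r}.ncard ≤ 2 * n := by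
  classical
  set S := {x : EuclideanSpace ℝ (Fin n) | x ∈ Λ ∧ ‖x - y‖ ^ 2 ≤ r} with hS
  obtain ⟨x₀, hx₀Λ, hx₀ne⟩ := hΛne
  have hn : 1 ≤ n := by
    by_contra h
    have hn0 : n = 0 := by omega
    subst hn0
    exact hx₀ne (Subsingleton.elim _ _)
  have hdpos : 0 < dΛ := by
    obtain ⟨x, _, hxne, hxd⟩ := hdΛ.1
    rw [← hxd]
    exact pow_pos (norm_pos_iff.mpr hxne) 2
  -- distance lower bound between distinct points of S
  have hdist : ∀ x₁ ∈ S, ∀ x₂ ∈ S, x₁ ≠ x₂ → dΛ ≤ ‖x₁ - x₂‖ ^ 2 := by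
    intro x₁ hx₁ x₂ hx₂ hne
    exact hdΛ.2 ⟨x₁ - x₂, sub_mem hx₁.1 hx₂.1, sub_ne_zero.mpr hne, rfl⟩
  -- every finset inside S has card ≤ 2n
  have hbnd : ∀ t : Finset (EuclideanSpace ℝ (Fin n)), ↑t ⊆ S → t.card ≤ 2 * n := by
    intro t htS
    by_cases hy : y ∈ t
    · -- then t = {y}
      have : t ⊆ {y} := by
        intro z hz
        rw [Finset.mem_singleton]
        by_contra hzy
        have h1 := hdist z (htS hz) y (htS hy) hzy
        have h2 : ‖z - y‖ ^ 2 ≤ r := (htS hz).2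
        linarith
      calc t.card ≤ 1 := Finset.card_le_one_iff_subset_singleton.mpr ⟨y, this⟩
        _ ≤ 2 * n := by omega
    · -- shift by y
      set g : EuclideanSpace ℝ (Fin n) → EuclideanSpace ℝ (Fin n) := fun x => x - y with hg
      have hginj : Set.InjOn g ↑t := fun a _ b _ h => by
        simpa [hg, sub_left_inj] using h
      have hcard : (t.image g).card = t.card := Finset.card_image_of_injOn hginj
      have hkey := key_aux (2 * n) (EuclideanSpace ℝ (Fin n))
        (by rw [finrank_euclideanSpace_fin]; omega) (t.image g) ?_ ?_
      · rw [finrank_euclideanSpace_fin] at hkey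
        omega
      · intro w hw
        obtain ⟨x, hx, rfl⟩ := Finset.mem_image.mp hw
        simp only [hg]
        intro h
        exact hy (by rwa [sub_eq_zero.mp h] at hx)
      · intro w₁ hw₁ w₂ hw₂ hne
        obtain ⟨x₁, hx₁, rfl⟩ := Finset.mem_image.mp hw₁
        obtain ⟨x₂, hx₂, rfl⟩ := Finset.mem_image.mp hw₂
        have hxne : x₁ ≠ x₂ := fun h => hne (by rw [h])
        have hd := hdist x₁ (htS hx₁) x₂ (htS hx₂) hxne
        have h1 : ‖x₁ - y‖ ^ 2 ≤ r := (htS hx₁).2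
        have h2 : ‖x₂ - y‖ ^ 2 ≤ r := (htS hx₂).2
        have hpol : ‖(x₁ - y) - (x₂ - y)‖ ^ 2
            = ‖x₁ - y‖ ^ 2 - 2 * ⟪x₁ - y, x₂ - y⟫ + ‖x₂ - y‖ ^ 2 :=
          norm_sub_sq_real _ _
        have hsub : (x₁ - y) - (x₂ - y) = x₁ - x₂ := by abel
        rw [hsub] at hpol
        simp only [hg]
        linarith
  -- finiteness
  have hfin : S.Finite := by
    by_contra hinf
    obtain ⟨t, htS, htc⟩ := Set.Infinite.exists_subset_card_eq hinf (2 * n + 1)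
    have := hbnd t htS
    omega
  refine ⟨hfin, ?_⟩
  have hb := hbnd hfin.toFinset (by simp)
  rwa [Set.ncard_eq_toFinset_card _ hfin]
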